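/- There exist ε > 0 and R₀ > 1/ε¹⁰ such that for all R > R₀: for every w ∈ K⁺ and every n ≥ 1, Mₙ ≤ max{((3/2)·Mₙ₋₁)^{3/2}, (1/ε)|yₙ|^{3/2}}. -/

import Mathlib

open Complex Filter Topology

/-- The quadratic automorphism `H(x,y,z) = (xy + az, x² + by, x)` of `ℂ³`. -/
noncomputable def H (a b : ℂ) (w : ℂ × ℂ × ℂ) : ℂ × ℂ × ℂ :=
  (w.1 * w.2.1 + a * w.2.2, w.1 ^ 2 + b * w.2.1, w.1)

/-- `V⁻ = {(x,y,z) : |xy| > max{R, 2|az|, |x|^{3/2}, (1/ε)|y|^{3/2}}}`. -/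
noncomputable def Vminus (a : ℂ) (ε R : ℝ) : Set (ℂ × ℂ × ℂ) :=
  {w | ‖w.1 * w.2.1‖ >
    max R (max (2 * ‖a * w.2.2‖)
      (max (‖w.1‖ ^ ((3 : ℝ) / 2))
        ((1 / ε) * ‖w.2.1‖ ^ ((3 : ℝ) / 2))))}

/-- `U⁺ = ⋃_{n≥0} H⁻ⁿ(V⁻)`, i.e. the points whose forward orbit meets `V⁻`. -/
noncomputable def Uplus (a b : ℂ) (ε R : ℝ) : Set (ℂ × ℂ × ℂ) :=
  ⋃ n : ℕ, (H a b)^[n] ⁻¹' Vminus a ε R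

/-- `K⁺ = ℂ³ \ U⁺`. -/
noncomputable def Kplus (a b : ℂ) (ε R : ℝ) : Set (ℂ × ℂ × ℂ) :=
  (Uplus a b ε R)ᶜ

/-- `Mₙ = max{R, 2|azₙ|, |xₙ|^{3/2}, (1/ε)|yₙ|^{3/2}}` where `Hⁿ(w) = (xₙ,yₙ,zₙ)`. -/
noncomputable def Mseq (a b : ℂ) (ε R : ℝ) (w : ℂ × ℂ × ℂ) (n : ℕ) : ℝ :=
  max R (max (2 * ‖a * ((H a b)^[n] w).2.2‖)
    (max (‖((H a b)^[n] w).1‖ ^ ((3 : ℝ) / 2))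
      ((1 / ε) * ‖((H a b)^[n] w).2.1‖ ^ ((3 : ℝ) / 2))))

/-- there exist `ε > 0` and `R₀ > 1/ε¹⁰` such that for all
`R > R₀`: for every `w ∈ K⁺` and every `n ≥ 1`,
`Mₙ ≤ max{((3/2)·Mₙ₋₁)^{3/2}, (1/ε)|yₙ|^{3/2}}`. -/
theorem stmt11 (a b : ℂ) (ha : a ≠ 0) (hb : b ≠ 0) :
    ∃ ε > (0 : ℝ), ∃ R₀ > 1 / ε ^ 10, ∀ R > R₀, ∀ w ∈ Kplus a b ε R,
      ∀ n : ℕ, Mseq a b ε R w (n + 1) ≤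
        max ((3 / 2 * Mseq a b ε R w n) ^ ((3 : ℝ) / 2))
          ((1 / ε) * ‖((H a b)^[n + 1] w).2.1‖ ^ ((3 : ℝ) / 2)) := by
  have hR₀ : (1:ℝ) / 1 ^ 10 < max 2 ((2 * ‖a‖ + 1) ^ 2) := by
    have h1 : (1:ℝ) / 1 ^ 10 = 1 := by norm_num
    rw [h1]
    exact lt_of_lt_of_le one_lt_two (le_max_left _ _)
  refine ⟨1, one_pos, max 2 ((2 * ‖a‖ + 1) ^ 2), hR₀, ?_⟩
  intro R hR w hw n
  set p := (H a b)^[n] w with hp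
  set M := Mseq a b 1 R w n with hM
  -- K⁺ condition
  simp only [Kplus, Uplus, Set.mem_compl_iff, Set.mem_iUnion, Set.mem_preimage,
    not_exists] at hw
  have hK : ‖p.1 * p.2.1‖ ≤ M := by
    have := hw n
    simp only [Vminus, Set.mem_setOf_eq, not_lt] at this
    exact this
  have hRM : R ≤ M := le_max_left _ _
  have hR2 : (2:ℝ) ≤ R := le_trans (le_max_left _ _) (le_of_lt hR)
  have hRa : (2 * ‖a‖ + 1) ^ 2 ≤ R := le_trans (le_max_right _ _) (le_of_lt hR)
  have hM1 : (1:ℝ) ≤ M := by linarith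
  have hMpos : (0:ℝ) < M := by linarith
  have haz : 2 * ‖a * p.2.2‖ ≤ M := le_trans (le_max_left _ _) (le_max_right _ _)
  have hx32 : (‖p.1‖) ^ ((3:ℝ)/2) ≤ M :=
    le_trans (le_trans (le_max_left _ _) (le_max_right _ _)) (le_max_right _ _)
  -- rewrite the (n+1)-st iterate
  have hgoal : (H a b)^[n+1] w = (p.1 * p.2.1 + a * p.2.2, p.1 ^ 2 + b * p.2.1, p.1) := by
    rw [Function.iterate_succ_apply', ← hp]; rfl
  rw [show Mseq a b 1 R w (n+1) = max R (max (2 * ‖a * ((H a b)^[n+1] w).2.2‖)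
    (max ((‖((H a b)^[n+1] w).1‖) ^ ((3 : ℝ) / 2))
      ((1 / 1) * (‖((H a b)^[n+1] w).2.1‖) ^ ((3 : ℝ) / 2)))) from rfl, hgoal]
  simp only
  set T := (3 / 2 * M) ^ ((3:ℝ)/2) with hT
  have hMM32 : M ≤ M ^ ((3:ℝ)/2) := by
    nth_rewrite 1 [← Real.rpow_one M]
    exact Real.rpow_le_rpow_of_exponent_le hM1 (by norm_num)
  have hT32 : M ^ ((3:ℝ)/2) ≤ T :=
    Real.rpow_le_rpow (le_of_lt hMpos) (by linarith) (by norm_num)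
  refine max_le ?_ (max_le ?_ (max_le ?_ ?_))
  · exact le_max_of_le_left (by linarith)
  · -- 2|a x| ≤ T
    have hx23 : ‖p.1‖ ≤ M ^ ((2:ℝ)/3) := by
      have h := Real.rpow_le_rpow (Real.rpow_nonneg (norm_nonneg _) _)
        hx32 (by norm_num : (0:ℝ) ≤ 2/3)
      rw [← Real.rpow_mul (norm_nonneg _)] at h
      norm_num at h
      exact h
    have ha12 : 2 * ‖a‖ ≤ M ^ ((1:ℝ)/2) := by
      have h1 : ((2 * ‖a‖ + 1) ^ 2 : ℝ) ^ ((1:ℝ)/2) ≤ M ^ ((1:ℝ)/2) :=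
        Real.rpow_le_rpow (by positivity) (by linarith) (by norm_num)
      have h2 : ((2 * ‖a‖ + 1) ^ 2 : ℝ) ^ ((1:ℝ)/2) = 2 * ‖a‖ + 1 := by
        rw [← Real.rpow_natCast (2 * ‖a‖ + 1) 2, ← Real.rpow_mul (by positivity)]
        norm_num
      linarith [h1, h2 ▸ h1]
    have h56 : M ^ ((1:ℝ)/2) ≤ M ^ ((5:ℝ)/6) :=
      Real.rpow_le_rpow_of_exponent_le hM1 (by norm_num)
    have key : 2 * ‖a * p.1‖ ≤ M ^ ((3:ℝ)/2) := by
      rw [norm_mul]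
      calc 2 * (‖a‖ * ‖p.1‖)
          = (2 * ‖a‖) * ‖p.1‖ := by ring
        _ ≤ M ^ ((5:ℝ)/6) * M ^ ((2:ℝ)/3) := by
            apply mul_le_mul (le_trans ha12 h56) hx23 (norm_nonneg _)
            positivity
        _ = M ^ ((3:ℝ)/2) := by
            rw [← Real.rpow_add hMpos]; norm_num
    exact le_max_of_le_left (le_trans key hT32)
  · -- |xy+az|^{3/2} ≤ T
    have h1 : ‖p.1 * p.2.1 + a * p.2.2‖ ≤ 3/2 * M := by
      calc ‖p.1 * p.2.1 + a * p.2.2‖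
          ≤ ‖p.1 * p.2.1‖ + ‖a * p.2.2‖ :=
            norm_add_le _ _
        _ ≤ 3/2 * M := by linarith
    exact le_max_of_le_left
      (Real.rpow_le_rpow (norm_nonneg _) h1 (by norm_num))
  · exact le_max_right _ _
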